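/- There exists a univariate polynomial S ∈ ℝ[X] such that, as polynomials in ℝ[x,y], Q − Q̃ = S(P); that is, the two Pinchuk maps (P,Q) and (P,Q̃) differ by the triangular polynomial automorphism (p,q) ↦ (p, q + S(p)) of the image plane. -/
import Mathlib


open MvPolynomial

/-- `t = xy − 1`, with `X 0 = x`, `X 1 = y`. -/
noncomputable def tP : MvPolynomial (Fin 2) ℝ := X 0 * X 1 - 1

/-- `h = t(xt + 1)`. -/
noncomputable def hP : MvPolynomial (Fin 2) ℝ := tP * (X 0 * tP + 1)

/-- `f = (xt + 1)²(t² + y)`. -/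
noncomputable def fP : MvPolynomial (Fin 2) ℝ := (X 0 * tP + 1) ^ 2 * (tP ^ 2 + X 1)

/-- `P = f + h`. -/
noncomputable def PP : MvPolynomial (Fin 2) ℝ := fP + hP

/-- The auxiliary polynomial `u(f,h)`. -/
noncomputable def uP : MvPolynomial (Fin 2) ℝ :=
  170 * fP * hP + 91 * hP ^ 2 + 195 * fP * hP ^ 2 + 69 * hP ^ 3 + 75 * fP * hP ^ 3 +
    C (75 / 4 : ℝ) * hP ^ 4

/-- `Q = −t² − 6th(h + 1) − u(f,h)`. -/
noncomputable def QP : MvPolynomial (Fin 2) ℝ := -tP ^ 2 - 6 * tP * hP * (hP + 1) - uP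

/-- `ũ(f,h) = −(1/4)f(75f³ + 300f²h + 450fh² + 276f² + 828fh + 48h² + 364f + 48h)`. -/
noncomputable def utP : MvPolynomial (Fin 2) ℝ :=
  -(C (1 / 4 : ℝ)) * fP *
    (75 * fP ^ 3 + 300 * fP ^ 2 * hP + 450 * fP * hP ^ 2 + 276 * fP ^ 2 + 828 * fP * hP +
      48 * hP ^ 2 + 364 * fP + 48 * hP)

/-- `Q̃ = −t² − 6th(h + 1) − ũ(f,h)`, the second coordinate of the "original"
Pinchuk map. -/
noncomputable def QtP : MvPolynomial (Fin 2) ℝ := -tP ^ 2 - 6 * tP * hP * (hP + 1) - utP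

lemma pinchuk_key (f h : MvPolynomial (Fin 2) ℝ) :
    (-(C (1 / 4 : ℝ)) * f *
        (75 * f ^ 3 + 300 * f ^ 2 * h + 450 * f * h ^ 2 + 276 * f ^ 2 + 828 * f * h +
          48 * h ^ 2 + 364 * f + 48 * h)) -
      (170 * f * h + 91 * h ^ 2 + 195 * f * h ^ 2 + 69 * h ^ 3 + 75 * f * h ^ 3 +
        C (75 / 4 : ℝ) * h ^ 4)
    = -(C (75 / 4 : ℝ) * (f + h) ^ 4) - 91 * (f + h) ^ 2 - 69 * (f + h) ^ 3 := by
  have hC4 : (4 : MvPolynomial (Fin 2) ℝ) = C (4 : ℝ) := by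
    rw [← map_ofNat (C : ℝ →+* MvPolynomial (Fin 2) ℝ) 4]
  have hC75 : (75 : MvPolynomial (Fin 2) ℝ) = C (75 : ℝ) := by
    rw [← map_ofNat (C : ℝ →+* MvPolynomial (Fin 2) ℝ) 75]
  have h4 : (4 : MvPolynomial (Fin 2) ℝ) * C (1 / 4 : ℝ) = 1 := by
    rw [hC4, ← C_mul]; norm_num
  have hb : (4 : MvPolynomial (Fin 2) ℝ) * C (75 / 4 : ℝ) = 75 := by
    rw [hC4, ← C_mul, hC75]; norm_num
  have h40 : (4 : MvPolynomial (Fin 2) ℝ) ≠ 0 := by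
    rw [hC4]
    simpa using (by norm_num : (4 : ℝ) ≠ 0)
  apply mul_left_cancel₀ h40
  linear_combination (-(f * (75 * f ^ 3 + 300 * f ^ 2 * h + 450 * f * h ^ 2 + 276 * f ^ 2 +
      828 * f * h + 48 * h ^ 2 + 364 * f + 48 * h))) * h4 + ((f + h) ^ 4 - h ^ 4) * hb

/-- The two Pinchuk maps `(P,Q)` and `(P,Q̃)` differ by a triangular polynomial
automorphism of the image plane: `Q − Q̃ = S(P)` for some univariate `S`. -/
theorem pinchuk_maps_differ_by_triangular_automorphism :
    ∃ S : Polynomial ℝ, QP - QtP = Polynomial.aeval PP S := by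
  refine ⟨-(Polynomial.C (75 / 4 : ℝ) * Polynomial.X ^ 4) - 91 * Polynomial.X ^ 2
      - 69 * Polynomial.X ^ 3, ?_⟩
  have hS : Polynomial.aeval PP (-(Polynomial.C (75 / 4 : ℝ) * Polynomial.X ^ 4)
      - 91 * Polynomial.X ^ 2 - 69 * Polynomial.X ^ 3)
      = -(C (75 / 4 : ℝ) * PP ^ 4) - 91 * PP ^ 2 - 69 * PP ^ 3 := by
    simp [algebraMap_eq, map_ofNat]
  rw [hS]
  have h1 : QP - QtP = utP - uP := by
    simp only [QP, QtP]; ring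
  rw [h1, uP, utP, PP]
  exact pinchuk_key fP hP
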